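/- arXiv:2511.01280 — 3 statements merged into one kernel-verified Lean document; each statement's English description precedes it below -/
import Mathlib

section
/- Fix integers q ≥ 2, m ≥ 1, 0 ≤ w ≤ m, and a ∈ {0,1,…,w}. The set T_{w,a}^{m,w+1} = {t ∈ Σ_q^m : the support indicator vector (1_{t_1 ≠ 0}, …, 1_{t_m ≠ 0}) lies in S_{w,a}^{m,w+1}} is a single zero-insertion correcting code over Σ_q. -/
/-- Lists obtained from `u` by inserting a single symbol `0` at some position. -/
def zeroInsBall {q : ℕ} [NeZero q] (u : List (Fin q)) : Set (List (Fin q)) :=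
  {v | ∃ i ≤ u.length, v = u.insertIdx i 0}
/-- Membership in `S_{w,a}^{m,w+1}`: binary sequences of length `m` of Hamming
weight `w` with `Σ i·sᵢ ≡ a (mod w+1)` (1-indexed positions). -/
def Scond (m w a : ℕ) (s : Fin m → Fin 2) : Prop :=
  (∑ i : Fin m, (s i : ℕ)) = w ∧ (∑ i : Fin m, ((i : ℕ) + 1) * (s i : ℕ)) % (w + 1) = a

section Aux

variable {q : ℕ} [NeZero q]

lemma len_insOfFn {m : ℕ} (t : Fin m → Fin q) {i : ℕ} (hi : i ≤ m) :
    ((List.ofFn t).insertIdx i (0 : Fin q)).length = m + 1 := by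
  rw [List.length_insertIdx_of_le_length (by simpa using hi), List.length_ofFn]

lemma getElem_cong {α : Type*} {l l' : List α} (h : l = l') (k : ℕ) (hk : k < l.length) :
    l[k]'hk = l'[k]'(h ▸ hk) := by subst h; rfl

lemma gi_lt {m : ℕ} (t : Fin m → Fin q) {i : ℕ} (hi : i ≤ m) {k : ℕ} (hki : k < i) :
    ((List.ofFn t).insertIdx i (0 : Fin q))[k]'(by rw [len_insOfFn t hi]; omega) =
      t ⟨k, lt_of_lt_of_le hki hi⟩ := by
  rw [List.getElem_insertIdx_of_lt hki]
  simp

lemma gi_self {m : ℕ} (t : Fin m → Fin q) {i : ℕ} (hi : i ≤ m) :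
    ((List.ofFn t).insertIdx i (0 : Fin q))[i]'(by rw [len_insOfFn t hi]; omega) = 0 :=
  List.getElem_insertIdx_self _

lemma gi_gt {m : ℕ} (t : Fin m → Fin q) {i : ℕ} (hi : i ≤ m) {k : ℕ} (hik : i < k)
    (hk : k < m + 1) :
    ((List.ofFn t).insertIdx i (0 : Fin q))[k]'(by rw [len_insOfFn t hi]; omega) =
      t ⟨k - 1, by omega⟩ := by
  obtain ⟨d, rfl⟩ : ∃ d, k = i + d + 1 := ⟨k - i - 1, by omega⟩
  rw [List.getElem_insertIdx_add_succ _ _ _ _ (by simpa using (by omega : i + d < m))]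
  simp only [List.getElem_ofFn]
  rfl

/-- indicator of a word, as a function on ℕ -/
noncomputable def ind {m : ℕ} (t : Fin m → Fin q) : ℕ → ℕ :=
  fun k => if h : k < m then (if t ⟨k, h⟩ = 0 then 0 else 1) else 0

lemma sum_ind {m : ℕ} (t : Fin m → Fin q) :
    (∑ i : Fin m, (((if t i = 0 then 0 else 1) : Fin 2) : ℕ)) = ∑ k ∈ Finset.range m, ind t k := by
  rw [Finset.sum_range fun k => ind t k]
  apply Finset.sum_congr rfl
  intro i _
  simp [ind, i.isLt]
  split <;> simp

lemma sum_wind {m : ℕ} (t : Fin m → Fin q) :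
    (∑ i : Fin m, ((i : ℕ) + 1) * (((if t i = 0 then 0 else 1) : Fin 2) : ℕ)) =
      ∑ k ∈ Finset.range m, (k + 1) * ind t k := by
  rw [Finset.sum_range fun k => (k + 1) * ind t k]
  apply Finset.sum_congr rfl
  intro i _
  simp only [ind, i.isLt, dif_pos]
  split <;> simp

set_option maxHeartbeats 1000000 in
lemma key {m w a : ℕ} (t t' : Fin m → Fin q)
    (ht : Scond m w a (fun i => if t i = 0 then 0 else 1))
    (ht' : Scond m w a (fun i => if t' i = 0 then 0 else 1))
    {i j : ℕ} (hi : i ≤ m) (hj : j ≤ m) (hij : i ≤ j)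
    (h : (List.ofFn t).insertIdx i (0 : Fin q) = (List.ofFn t').insertIdx j (0 : Fin q)) :
    t = t' := by
  have hu : ∀ k, (hk : k < m + 1) →
      ((List.ofFn t).insertIdx i (0 : Fin q))[k]'(by rw [len_insOfFn t hi]; omega)
      = ((List.ofFn t').insertIdx j (0 : Fin q))[k]'(by rw [len_insOfFn t' hj]; omega) := by
    intro k hk
    exact getElem_cong h k _
  -- case i = j
  rcases eq_or_lt_of_le hij with rfl | hij'
  · funext k
    by_cases hk : (k:ℕ) < i
    · exact (gi_lt t hi hk).symm.trans ((hu k (by omega)).trans (gi_lt t' hj hk))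
    · exact (gi_gt t hi (by omega) (by omega)).symm.trans
        ((hu ((k:ℕ) + 1) (by omega)).trans (gi_gt t' hj (by omega) (by omega)))
  -- now i < j, hence i < m, 1 ≤ j
  have hB : t' ⟨i, by omega⟩ = 0 := by
    exact (gi_lt t' hj hij').symm.trans (((hu i (by omega)).symm).trans (gi_self t hi))
  have hD : t ⟨j - 1, by omega⟩ = 0 := by
    exact (gi_gt t hi hij' (by omega)).symm.trans ((hu j (by omega)).trans (gi_self t' hj))
  have hA : ∀ k, (hk : k < i) → t ⟨k, by omega⟩ = t' ⟨k, by omega⟩ := by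
    intro k hk
    exact (gi_lt t hi hk).symm.trans ((hu k (by omega)).trans (gi_lt t' hj (by omega)))
  have hC : ∀ k, i < k → (hk : k < j) → t' ⟨k, by omega⟩ = t ⟨k - 1, by omega⟩ := by
    intro k hk1 hk2
    exact (gi_lt t' hj hk2).symm.trans (((hu k (by omega)).symm).trans (gi_gt t hi hk1 (by omega)))
  have hE : ∀ k, j ≤ k → (hk : k < m) → t ⟨k, by omega⟩ = t' ⟨k, by omega⟩ := by
    intro k hk1 hk2
    exact (gi_gt t hi (by omega) (by omega)).symm.trans
      ((hu (k + 1) (by omega)).trans (gi_gt t' hj (by omega) (by omega)))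
  -- indicator versions
  have isB : ind t' i = 0 := by simp [ind, (by omega : i < m), hB]
  have isD : ind t (j - 1) = 0 := by simp [ind, (by omega : j - 1 < m), hD]
  have isC : ∀ k, i < k → k < j → ind t' k = ind t (k - 1) := by
    intro k h1 h2
    simp only [ind, dif_pos (by omega : k < m), dif_pos (by omega : k - 1 < m), hC k h1 h2]
  have isE : ∀ k, j ≤ k → ind t k = ind t' k := by
    intro k hk1
    by_cases hk2 : k < m
    · simp only [ind, dif_pos hk2, hE k hk1 hk2]
    · simp [ind, hk2]
  have isA : ∀ k, k < i → ind t k = ind t' k := by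
    intro k hk
    simp only [ind, dif_pos (by omega : k < m), hA k hk]
  -- sum identities
  obtain ⟨d, hd⟩ : ∃ d, d = ∑ k ∈ Finset.Ico i (j - 1), ind t k := ⟨_, rfl⟩
  have hsplit : ∀ (f : ℕ → ℕ), ∑ k ∈ Finset.range m, f k =
      ∑ k ∈ Finset.Ico 0 i, f k + ∑ k ∈ Finset.Ico i j, f k + ∑ k ∈ Finset.Ico j m, f k := by
    intro f
    rw [Finset.range_eq_Ico m,
      ← Finset.sum_Ico_consecutive f (show (0:ℕ) ≤ j by omega) hj,
      ← Finset.sum_Ico_consecutive f (show (0:ℕ) ≤ i by omega) (le_of_lt hij')]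
  have hmidt : ∑ k ∈ Finset.Ico i j, (k + 1) * ind t k =
      ∑ k ∈ Finset.Ico i (j - 1), (k + 1) * ind t k := by
    have : j = (j - 1) + 1 := by omega
    rw [this, Finset.sum_Ico_succ_top (by omega)]
    rw [← this, isD]
    simp
  have hmidt' : ∑ k ∈ Finset.Ico i j, (k + 1) * ind t' k =
      ∑ k ∈ Finset.Ico i (j - 1), ((k + 1) * ind t k + ind t k) := by
    rw [Finset.sum_eq_sum_Ico_succ_bot hij', isB, Nat.mul_zero, Nat.zero_add]
    rw [Finset.sum_Ico_eq_sum_range, Finset.sum_Ico_eq_sum_range]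
    have hlen : j - (i + 1) = j - 1 - i := by omega
    rw [hlen]
    apply Finset.sum_congr rfl
    intro r hr
    simp only [Finset.mem_range] at hr
    rw [isC (i + 1 + r) (by omega) (by omega)]
    have : i + 1 + r - 1 = i + r := by omega
    rw [this]
    ring
  have hS : ∑ k ∈ Finset.range m, (k + 1) * ind t' k
      = ∑ k ∈ Finset.range m, (k + 1) * ind t k + d := by
    rw [hd]
    rw [hsplit (fun k => (k + 1) * ind t k), hsplit (fun k => (k + 1) * ind t' k),
      hmidt, hmidt', Finset.sum_add_distrib]
    have e1 : ∑ k ∈ Finset.Ico 0 i, (k + 1) * ind t' k = ∑ k ∈ Finset.Ico 0 i, (k + 1) * ind t k :=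
      Finset.sum_congr rfl fun k hk => by rw [isA k (by simpa using (Finset.mem_Ico.mp hk).2)]
    have e2 : ∑ k ∈ Finset.Ico j m, (k + 1) * ind t' k = ∑ k ∈ Finset.Ico j m, (k + 1) * ind t k :=
      Finset.sum_congr rfl fun k hk => by rw [isE k (Finset.mem_Ico.mp hk).1]
    rw [e1, e2]
    ring
  -- d ≤ w
  have hdw : d ≤ w := by
    rw [hd]
    calc ∑ k ∈ Finset.Ico i (j - 1), ind t k ≤ ∑ k ∈ Finset.range m, ind t k := by
          apply Finset.sum_le_sum_of_subset
          intro k hk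
          simp only [Finset.mem_Ico] at hk
          simp only [Finset.mem_range]
          omega
      _ = w := by rw [← sum_ind]; exact ht.1
  -- mod condition forces d = 0
  have hmod : (∑ k ∈ Finset.range m, (k + 1) * ind t k + d) % (w + 1)
      = (∑ k ∈ Finset.range m, (k + 1) * ind t k) % (w + 1) := by
    rw [← hS]
    have h1 := ht.2
    have h2 := ht'.2
    rw [sum_wind] at h1 h2
    rw [h1, h2]
  have hd0 : d = 0 := by
    have hcancel : d ≡ 0 [MOD w + 1] := by
      have h2 : (∑ k ∈ Finset.range m, (k + 1) * ind t k) + d ≡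
          (∑ k ∈ Finset.range m, (k + 1) * ind t k) + 0 [MOD w + 1] := by
        simpa [Nat.ModEq] using hmod
      exact Nat.ModEq.add_left_cancel' _ h2
    have h3 : d % (w + 1) = 0 := by simpa [Nat.ModEq] using hcancel
    rw [← Nat.mod_eq_of_lt (show d < w + 1 by omega), h3]
  -- all window indicators vanish
  have hzero : ∀ k ∈ Finset.Ico i (j - 1), ind t k = 0 :=
    Finset.sum_eq_zero_iff.mp (hd.symm.trans hd0)
  -- t k = 0 on [i, j)
  have htz : ∀ k, i ≤ k → (hk : k < j) → t ⟨k, by omega⟩ = 0 := by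
    intro k h1 h2
    by_cases hk1 : k = j - 1
    · subst hk1; exact hD
    · have := hzero k (Finset.mem_Ico.mpr ⟨h1, by omega⟩)
      simp only [ind, dif_pos (by omega : k < m)] at this
      by_contra hne
      simp [hne] at this
  have ht'z : ∀ k, i ≤ k → (hk : k < j) → t' ⟨k, by omega⟩ = 0 := by
    intro k h1 h2
    rcases eq_or_lt_of_le h1 with rfl | h1'
    · exact hB
    · rw [hC k h1' h2]
      exact htz (k - 1) (by omega) (by omega)
  funext k
  rcases lt_trichotomy (k : ℕ) i with hk | hk | hk
  · have := hA k hk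
    convert this using 2 <;> simp
  · have h1 := htz k (by omega) (by omega)
    have h2 := ht'z k (by omega) (by omega)
    have e : (⟨(k:ℕ), by omega⟩ : Fin m) = k := by ext; rfl
    rw [e] at h1 h2
    rw [h1, h2]
  · by_cases hkj : (k : ℕ) < j
    · have h1 := htz k (by omega) hkj
      have h2 := ht'z k (by omega) hkj
      have e : (⟨(k:ℕ), by omega⟩ : Fin m) = k := by ext; rfl
      rw [e] at h1 h2
      rw [h1, h2]
    · have := hE k (by omega) k.isLt
      convert this using 2 <;> simp

end Aux

theorem stmt13 (q m w a : ℕ) [NeZero q] (hq : 2 ≤ q) (hm : 1 ≤ m) (hw : w ≤ m) (ha : a ≤ w)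
    (t t' : Fin m → Fin q)
    (ht : Scond m w a (fun i => if t i = 0 then 0 else 1))
    (ht' : Scond m w a (fun i => if t' i = 0 then 0 else 1))
    (hne : t ≠ t') :
    ∀ v : List (Fin q),
      v ∈ zeroInsBall (List.ofFn t) → v ∈ zeroInsBall (List.ofFn t') → False := by
  rintro v ⟨i, hi, rfl⟩ ⟨j, hj, hv⟩
  simp only [List.length_ofFn] at hi hj
  rcases le_total i j with hij | hij
  · exact hne (key t t' ht ht' hi hj hij hv)
  · exact hne (key t' t ht' ht hj hi hij hv.symm).symm
end

section
/- For all integers q ≥ 2 and m ≥ 1 there exists a single zero-insertion correcting code C' ⊆ Σ_q^m with |C'| ≥ q^{m+1} / ((q−1)(m+1)). -/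
namespace ZIC
variable {q : ℕ} [NeZero q]

/-- number of nonzero entries -/
def T (l : List (Fin q)) : ℕ := (l.filter (fun x => x != 0)).length

/-- number of nonzero entries among the first `r` -/
def Y (l : List (Fin q)) (r : ℕ) : ℕ := T (l.take r)

/-- weighted sum invariant -/
def G : List (Fin q) → ℕ
  | [] => 0
  | x :: l => G l + if x ≠ 0 then l.length + 1 else 0

lemma T_cons (x : Fin q) (l : List (Fin q)) :
    T (x :: l) = T l + if x ≠ 0 then 1 else 0 := by
  by_cases h : x = 0 <;> simp [T, List.filter_cons, h]

lemma T_append (a b : List (Fin q)) : T (a ++ b) = T a + T b := by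
  simp [T, List.filter_append]

lemma T_le_length (l : List (Fin q)) : T l ≤ l.length :=
  List.length_filter_le _ _

lemma T_insertIdx (a : Fin q) (l : List (Fin q)) {i : ℕ} (h : i ≤ l.length) :
    T (l.insertIdx i 0) = T l := by
  have := (List.perm_insertIdx (0 : Fin q) l h).filter (fun x => x != 0)
  have h2 := this.length_eq
  simpa [T, List.filter_cons] using h2

lemma take_insertIdx_self (a : Fin q) : ∀ (i : ℕ) (l : List (Fin q)),
    (l.insertIdx i a).take i = l.take i
  | 0, l => by simp
  | (i+1), [] => by simp [List.insertIdx]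
  | (i+1), x :: l => by
      simp [List.insertIdx_succ_cons, take_insertIdx_self a i l]

lemma G_insertIdx : ∀ (i : ℕ) (l : List (Fin q)), i ≤ l.length →
    G (l.insertIdx i 0) = G l + Y l i
  | 0, l, _ => by simp [G, Y, T]
  | (i+1), [], h => by simp at h
  | (i+1), x :: l, h => by
      have hi : i ≤ l.length := by simpa using h
      have hlen : (l.insertIdx i (0:Fin q)).length = l.length + 1 :=
        List.length_insertIdx_of_le_length hi _
      rw [List.insertIdx_succ_cons]
      show G (l.insertIdx i 0) + (if x ≠ 0 then (l.insertIdx i (0:Fin q)).length + 1 else 0)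
          = G l + (if x ≠ 0 then l.length + 1 else 0) + Y (x :: l) (i+1)
      rw [G_insertIdx i l hi, hlen]
      have : Y (x :: l) (i+1) = Y l i + if x ≠ 0 then 1 else 0 := by
        by_cases hx : x = 0 <;> simp [Y, List.take_succ_cons, T_cons, hx]
      rw [this]
      by_cases hx : x = 0 <;> simp [hx] <;> omega

lemma Y_split {v : List (Fin q)} {i j : ℕ} (hij : i ≤ j) :
    Y v j = Y v i + T ((v.take j).drop i) := by
  have h1 : (v.take j) = (v.take j).take i ++ (v.take j).drop i :=
    (List.take_append_drop _ _).symm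
  have h2 : (v.take j).take i = v.take i := by
    rw [List.take_take, Nat.min_eq_left hij]
  calc Y v j = T (v.take j) := rfl
    _ = T ((v.take j).take i ++ (v.take j).drop i) := by rw [← h1]
    _ = Y v i + T ((v.take j).drop i) := by rw [T_append, h2]; rfl

lemma Y_le_T (v : List (Fin q)) (j : ℕ) : Y v j ≤ T v := by
  conv_rhs => rw [← List.take_append_drop j v]
  rw [T_append]; exact Nat.le_add_right _ _

lemma zero_of_T_eq_zero {l : List (Fin q)} (h : T l = 0) {p : ℕ} (hp : p < l.length) :
    l[p] = 0 := by
  have := List.eq_nil_of_length_eq_zero h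
  have hmem : l[p] ∈ l.filter (fun x => x != 0) ∨ l[p] = 0 := by
    by_cases hz : l[p] = 0
    · exact Or.inr hz
    · exact Or.inl (List.mem_filter.2 ⟨List.getElem_mem hp, by simpa using hz⟩)
  rcases hmem with hmem | hz
  · rw [this] at hmem; simp at hmem
  · exact hz


lemma key {m : ℕ} {l l' : List (Fin q)} (hl : l.length = m) (hl' : l'.length = m)
    {i j : ℕ} (hi : i ≤ m) (hj : j ≤ m) (hij : i ≤ j)
    (heq : l.insertIdx i 0 = l'.insertIdx j 0) (hne : l ≠ l') :
    T l = T l' ∧ T l < m ∧ G l % (T l + 1) ≠ G l' % (T l + 1) := by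
  have hil : i ≤ l.length := hl ▸ hi
  have hjl' : j ≤ l'.length := hl' ▸ hj
  have hvlen : (l.insertIdx i (0:Fin q)).length = m + 1 := by
    rw [List.length_insertIdx_of_le_length hil, hl]
  have hT : T l = T l' := by
    rw [← T_insertIdx (0:Fin q) l hil, ← T_insertIdx (0:Fin q) l' hjl', ← heq]
  rcases Nat.lt_or_ge i j with hlt | hge
  swap
  · -- i = j
    have : i = j := le_antisymm hij hge
    subst this
    exact absurd (List.insertIdx_injective i 0 heq) hne
  -- i < j
  have hvi : (l.insertIdx i (0:Fin q))[i]'(by omega) = 0 :=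
    List.getElem_insertIdx_self _
  have hvj : (l.insertIdx i (0:Fin q))[j]'(by omega) = 0 := by
    rw [List.getElem_of_eq heq]
    exact List.getElem_insertIdx_self _
  -- T l < m
  have hTlt : T l < m := by
    have hjm : j - 1 < l.length := by omega
    have hlj : l[j-1]'(hjm) = 0 := by
      have hik : i + (j - 1 - i) < l.length := by omega
      have h2 := List.getElem_insertIdx_add_succ l 0 i (j - 1 - i) hik
      simp only [show i + (j - 1 - i) + 1 = j from by omega,
        show i + (j - 1 - i) = j - 1 from by omega,
        show j - 1 + 1 = j from by omega] at h2
      rw [← h2]; exact hvj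
    rcases Nat.lt_or_ge (T l) m with h | h
    · exact h
    · exfalso
      have hTm : (l.filter (fun x => x != 0)).length = l.length := by
        have := T_le_length l
        simp only [T] at this h ⊢; omega
      have hall := List.length_filter_eq_length_iff.mp hTm
      have := hall _ (List.getElem_mem hjm)
      rw [hlj] at this; simp at this
  refine ⟨hT, hTlt, ?_⟩
  -- G relation
  have hYi : Y (l.insertIdx i (0:Fin q)) i = Y l i := by
    rw [Y, take_insertIdx_self, ← Y]
  have hYj : Y (l.insertIdx i (0:Fin q)) j = Y l' j := by
    rw [heq, Y, take_insertIdx_self, ← Y]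
  set k := T (((l.insertIdx i (0:Fin q)).take j).drop i) with hk
  have hsplit : Y (l.insertIdx i (0:Fin q)) j = Y (l.insertIdx i (0:Fin q)) i + k :=
    Y_split (le_of_lt hlt)
  have hG1 : G (l.insertIdx i (0:Fin q)) = G l + Y l i := G_insertIdx i l hil
  have hG2 : G (l.insertIdx i (0:Fin q)) = G l' + Y l' j := by
    rw [heq]; exact G_insertIdx j l' hjl'
  -- k ≥ 1
  have hk1 : 1 ≤ k := by
    rcases Nat.eq_zero_or_pos k with h | h
    swap
    · exact h
    · exfalso
      -- zero segment ⇒ l = l'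
      have hseg : ∀ p, i ≤ p → p ≤ j → (hp : p < (l.insertIdx i (0:Fin q)).length) →
          (l.insertIdx i (0:Fin q))[p] = 0 := by
        intro p hip hpj hp
        rcases Nat.lt_or_ge p j with hpj' | hpj'
        · have hplen : p - i < (((l.insertIdx i (0:Fin q)).take j).drop i).length := by
            simp only [List.length_drop, List.length_take]; omega
          have := zero_of_T_eq_zero (hk ▸ h) hplen
          rw [List.getElem_drop, List.getElem_take] at this
          simpa only [show i + (p - i) = p from by omega] using this
        · have : p = j := by omega
          subst this; exact hvj
      apply hne
      have hle : l = (l.insertIdx i (0:Fin q)).eraseIdx i :=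
        (List.eraseIdx_insertIdx_self _).symm
      have hle' : l' = (l.insertIdx i (0:Fin q)).eraseIdx j := by
        rw [heq, List.eraseIdx_insertIdx_self]
      rw [hle, hle']
      apply List.ext_getElem
      · rw [List.length_eraseIdx_of_lt (by omega), List.length_eraseIdx_of_lt (by omega)]
      · intro p h1 h2
        rw [List.length_eraseIdx_of_lt (by omega)] at h1
        rcases Nat.lt_or_ge p i with hpi | hpi
        · rw [List.getElem_eraseIdx_of_lt _ hpi,
            List.getElem_eraseIdx_of_lt _ (by omega)]
        · rcases Nat.lt_or_ge p j with hpj | hpj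
          · rw [List.getElem_eraseIdx_of_ge _ hpi,
              List.getElem_eraseIdx_of_lt _ hpj]
            rw [hseg (p+1) (by omega) (by omega) (by omega),
              hseg p hpi (by omega) (by omega)]
          · rw [List.getElem_eraseIdx_of_ge _ hpi,
              List.getElem_eraseIdx_of_ge _ hpj]
  -- k ≤ T l
  have hk2 : k ≤ T l := by
    have h1 : Y (l.insertIdx i (0:Fin q)) j ≤ T (l.insertIdx i (0:Fin q)) := Y_le_T _ j
    have h2 : T (l.insertIdx i (0:Fin q)) = T l := T_insertIdx (0:Fin q) l hil
    omega
  -- conclude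
  have hGeq : G l = G l' + k := by omega
  intro hmod
  have hdvd : (T l + 1) ∣ k := by
    have h1 : (G l' + k) % (T l + 1) = (G l' + 0) % (T l + 1) := by
      rw [Nat.add_zero, ← hGeq]; exact hmod
    have h2 : k ≡ 0 [MOD T l + 1] := Nat.ModEq.add_left_cancel' _ h1
    exact Nat.modEq_zero_iff_dvd.mp h2
  have := Nat.le_of_dvd (by omega) hdvd
  omega


lemma T_ofFn {m : ℕ} (c : Fin m → Fin q) :
    T (List.ofFn c) = (Finset.univ.filter (fun i => c i ≠ 0)).card := by
  rw [T, List.ofFn_eq_map, List.filter_map, List.length_map]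
  have h1 : (Finset.filter (fun i => c i ≠ 0) Finset.univ).card
      = (List.filter (fun i => decide (c i ≠ 0)) (List.finRange m)).length := by
    rw [Fin.univ_def]
    rfl
  rw [h1]
  congr 1
  apply List.filter_congr
  intro a _
  by_cases h : c a = 0 <;> simp [h, Function.comp]


lemma card_supp {m : ℕ} (s : Finset (Fin m)) :
    (Finset.univ.filter
      (fun c : Fin m → Fin q => Finset.univ.filter (fun i => c i ≠ 0) = s)).card
      = (q-1)^s.card := by
  have hset : (Finset.univ.filter
      (fun c : Fin m → Fin q => Finset.univ.filter (fun i => c i ≠ 0) = s))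
      = Fintype.piFinset (fun i => if i ∈ s then Finset.univ.erase 0 else {0}) := by
    ext c
    simp only [Finset.mem_filter, Finset.mem_univ, true_and, Fintype.mem_piFinset]
    constructor
    · intro h i
      by_cases hi : i ∈ s
      · simp only [hi, if_true, Finset.mem_erase, Finset.mem_univ, and_true]
        rw [← h] at hi
        simpa using hi
      · simp only [hi, if_false, Finset.mem_singleton]
        by_contra hc
        exact hi (h ▸ (by simpa using hc : i ∈ Finset.univ.filter (fun i => c i ≠ 0)))
    · intro h
      ext i
      simp only [Finset.mem_filter, Finset.mem_univ, true_and]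
      have := h i
      by_cases hi : i ∈ s
      · simp only [hi, if_true, Finset.mem_erase] at this
        exact ⟨fun _ => hi, fun _ => this.1⟩
      · simp only [hi, if_false, Finset.mem_singleton] at this
        simp [this, hi]
  rw [hset, Fintype.card_piFinset]
  have : ∀ i : Fin m, ((if i ∈ s then Finset.univ.erase (0 : Fin q) else {0}).card)
      = if i ∈ s then q - 1 else 1 := by
    intro i
    by_cases hi : i ∈ s <;>
      simp [hi, Finset.card_erase_of_mem, Finset.card_univ]
  simp only [this]
  rw [Finset.prod_ite_mem, Finset.univ_inter, Finset.prod_const]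

lemma card_W {m : ℕ} (t : ℕ) :
    (Finset.univ.filter (fun c : Fin m → Fin q => T (List.ofFn c) = t)).card
      = m.choose t * (q-1)^t := by
  have hset : (Finset.univ.filter (fun c : Fin m → Fin q => T (List.ofFn c) = t))
      = (Finset.powersetCard t (Finset.univ : Finset (Fin m))).biUnion
          (fun s => Finset.univ.filter
            (fun c : Fin m → Fin q => Finset.univ.filter (fun i => c i ≠ 0) = s)) := by
    ext c
    simp only [Finset.mem_filter, Finset.mem_univ, true_and, Finset.mem_biUnion,
      Finset.mem_powersetCard, T_ofFn]
    constructor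
    · intro h
      exact ⟨_, ⟨Finset.subset_univ _, h⟩, rfl⟩
    · rintro ⟨s, ⟨-, hcard⟩, rfl⟩
      exact hcard
  rw [hset, Finset.card_biUnion]
  · rw [Finset.sum_congr rfl (fun s hs => ?_), Finset.sum_const,
      Finset.card_powersetCard, Finset.card_univ, Fintype.card_fin, smul_eq_mul]
    rw [card_supp s, (Finset.mem_powersetCard.mp hs).2]
  · intro s hs s' hs' hne
    rw [Function.onFun, Finset.disjoint_left]
    intro c hc hc'
    simp only [Finset.mem_filter] at hc hc'
    exact hne (hc.2 ▸ hc'.2)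


end ZIC

open ZIC Finset
/-- For all `q ≥ 2` and `m ≥ 1` there exists a single
zero-insertion correcting code `C' ⊆ Σ_q^m` with `|C'| ≥ q^{m+1}/((q−1)(m+1))`. -/
theorem stmt14 (q m : ℕ) [NeZero q] (hq : 2 ≤ q) (hm : 1 ≤ m) :
    ∃ C : Set (Fin m → Fin q),
      (q : ℝ) ^ (m + 1) / (((q : ℝ) - 1) * ((m : ℝ) + 1)) ≤ (C.ncard : ℝ) ∧
      ∀ c ∈ C, ∀ c' ∈ C, c ≠ c' →
        ∀ v : List (Fin q),
          v ∈ zeroInsBall (List.ofFn c) → v ∈ zeroInsBall (List.ofFn c') → False := by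
  classical
  set W : ℕ → Finset (Fin m → Fin q) :=
    fun t => univ.filter (fun c => T (List.ofFn c) = t) with hW
  set cls : ℕ → ℕ → Finset (Fin m → Fin q) :=
    fun t a => univ.filter
      (fun c => T (List.ofFn c) = t ∧ G (List.ofFn c) % (t+1) = a) with hcls
  -- pigeonhole
  have hpig : ∀ t : ℕ, ∃ a : ℕ, (W t).card ≤ (t+1) * (cls t a).card := by
    intro t
    have hWb : W t = (range (t+1)).biUnion (cls t) := by
      ext c
      simp only [hW, hcls, Finset.mem_filter, Finset.mem_univ, true_and,
        Finset.mem_biUnion, Finset.mem_range]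
      constructor
      · intro h
        exact ⟨G (List.ofFn c) % (t+1), Nat.mod_lt _ (Nat.succ_pos t), h, rfl⟩
      · rintro ⟨a, -, h, -⟩; exact h
    have hdisj : ∀ a ∈ range (t+1), ∀ b ∈ range (t+1), a ≠ b →
        Disjoint (cls t a) (cls t b) := by
      intro a _ b _ hab
      rw [Finset.disjoint_left]
      intro c hc hc'
      simp only [hcls, Finset.mem_filter] at hc hc'
      exact hab (hc.2.2 ▸ hc'.2.2)
    have hsum : ∑ a ∈ range (t+1), (cls t a).card = (W t).card := by
      rw [hWb, Finset.card_biUnion hdisj]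
    have hex : ∃ a ∈ range (t+1), (W t).card ≤ (t+1) * (cls t a).card := by
      apply Finset.exists_le_of_sum_le ⟨0, Finset.mem_range.mpr (Nat.succ_pos t)⟩
      rw [← Finset.mul_sum, hsum, Finset.sum_const, Finset.card_range, smul_eq_mul]
    obtain ⟨a, -, ha⟩ := hex
    exact ⟨a, ha⟩
  choose A hA using hpig
  set D : Finset (Fin m → Fin q) :=
    (W m) ∪ (range m).biUnion (fun t => cls t (A t)) with hD
  refine ⟨(↑D : Set (Fin m → Fin q)), ?_, ?_⟩
  · -- cardinality bound
    rw [Set.ncard_coe_finset]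
    have hq1 : 1 ≤ q := le_trans (by norm_num) hq
    set x : ℝ := (q : ℝ) - 1 with hxdef
    have hx1 : (1:ℝ) ≤ x := by
      have : (2:ℝ) ≤ (q:ℝ) := by exact_mod_cast hq
      simp [hxdef]; linarith
    have hxq : ((q - 1 : ℕ) : ℝ) = x := by
      rw [Nat.cast_sub hq1]; simp [hxdef]
    have hm1 : (1:ℝ) ≤ (m:ℝ) := by exact_mod_cast hm
    have hDpos : (0:ℝ) < x * ((m:ℝ)+1) := by nlinarith
    -- card of D
    have hcard : (D.card : ℝ)
        = ((W m).card : ℝ) + ∑ t ∈ range m, ((cls t (A t)).card : ℝ) := by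
      have hd1 : Disjoint (W m) ((range m).biUnion fun t => cls t (A t)) := by
        rw [Finset.disjoint_left]
        intro c hc hc'
        simp only [hW, hcls, Finset.mem_filter, Finset.mem_biUnion,
          Finset.mem_range, Finset.mem_univ, true_and] at hc hc'
        obtain ⟨t, ht, h2, -⟩ := hc'
        omega
      have hd2 : ∀ t ∈ range m, ∀ t' ∈ range m, t ≠ t' →
          Disjoint (cls t (A t)) (cls t' (A t')) := by
        intro t ht t' ht' htt
        rw [Finset.disjoint_left]
        intro c hc hc'
        simp only [hcls, Finset.mem_filter] at hc hc'
        exact htt (hc.2.1 ▸ hc'.2.1)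
      rw [hD, Finset.card_union_of_disjoint hd1, Finset.card_biUnion hd2]
      push_cast; ring
    have hWc : ∀ t : ℕ, ((W t).card : ℝ) = (m.choose t : ℝ) * x ^ t := by
      intro t
      simp only [hW]
      rw [card_W t, Nat.cast_mul, Nat.cast_pow, hxq]
    have hWm : ((W m).card : ℝ) = x ^ m := by
      rw [hWc m, Nat.choose_self]; simp
    have hclsge : ∀ t ∈ range m,
        (m.choose t : ℝ) * x ^ t / ((t:ℝ)+1) ≤ ((cls t (A t)).card : ℝ) := by
      intro t _
      have h := hA t
      have h' : ((W t).card : ℝ) ≤ (((t:ℕ)+1 : ℕ) : ℝ) * ((cls t (A t)).card : ℝ) := by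
        exact_mod_cast h
      rw [hWc t] at h'
      rw [div_le_iff₀ (by positivity)]
      push_cast at h'
      nlinarith [h']
    set S := ∑ t ∈ range m, (m.choose t : ℝ) * x ^ t / ((t:ℝ)+1) with hS
    have hsum_ge : S ≤ ∑ t ∈ range m, ((cls t (A t)).card : ℝ) :=
      Finset.sum_le_sum hclsge
    have hSmul : S * (x * ((m:ℝ)+1)) = (q:ℝ)^(m+1) - 1 - x^(m+1) := by
      rw [hS, Finset.sum_mul]
      have hterm : ∀ t ∈ range m,
          (m.choose t : ℝ) * x ^ t / ((t:ℝ)+1) * (x*((m:ℝ)+1))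
          = x^(t+1) * (((m+1).choose (t+1) : ℕ) : ℝ) := by
        intro t _
        have hn : (m+1) * m.choose t = ((m+1).choose (t+1)) * (t+1) :=
          Nat.add_one_mul_choose_eq m t
        have hn' : ((m:ℝ)+1) * (m.choose t : ℝ)
            = (((m+1).choose (t+1) : ℕ) : ℝ) * ((t:ℝ)+1) := by exact_mod_cast hn
        have ht1 : ((t:ℝ)+1) ≠ 0 := by positivity
        rw [div_mul_eq_mul_div, div_eq_iff ht1]
        linear_combination (x^t * x) * hn'
      rw [Finset.sum_congr rfl hterm]
      have hbin : ∑ k ∈ range (m+2), x^k * (((m+1).choose k : ℕ) : ℝ) = (q:ℝ)^(m+1) := by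
        have hb := add_pow x 1 (m+1)
        simp only [one_pow, mul_one] at hb
        have hxq1 : x + 1 = (q:ℝ) := by rw [hxdef]; ring
        rw [hxq1] at hb
        rw [← hb]
      have h1 := Finset.sum_range_succ' (fun k => x^k * (((m+1).choose k : ℕ) : ℝ)) (m+1)
      have h2 := Finset.sum_range_succ (fun t => x^(t+1) * (((m+1).choose (t+1) : ℕ) : ℝ)) m
      simp only [pow_zero, Nat.choose_zero_right, Nat.cast_one, one_mul,
        Nat.choose_self, mul_one] at h1 h2
      rw [h2] at h1
      rw [hbin] at h1
      linarith [h1]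
    -- final arithmetic
    have hdc : x^m + S ≤ (D.card:ℝ) := by
      rw [hcard, hWm]; linarith [hsum_ge]
    rw [div_le_iff₀ hDpos]
    have hxp : (1:ℝ) ≤ x^(m+1) := one_le_pow₀ hx1
    have hps : x^m * x = x^(m+1) := (pow_succ x m).symm
    have key1 : (q:ℝ)^(m+1) ≤ (x^m + S) * (x*((m:ℝ)+1)) := by
      have hexp : (x^m + S) * (x*((m:ℝ)+1))
          = x^(m+1)*((m:ℝ)+1) + ((q:ℝ)^(m+1) - 1 - x^(m+1)) := by
        rw [add_mul, hSmul, ← hps]; ring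
      rw [hexp]
      have h9 : (1:ℝ) ≤ (m:ℝ)*x^(m+1) := by nlinarith
      nlinarith
    calc (q:ℝ)^(m+1) ≤ (x^m + S) * (x*((m:ℝ)+1)) := key1
      _ ≤ (D.card:ℝ) * (x*((m:ℝ)+1)) :=
        mul_le_mul_of_nonneg_right hdc hDpos.le
  · -- code property
    intro c hc c' hc' hne v hv hv'
    obtain ⟨i, hi, rfl⟩ := hv
    obtain ⟨j, hj, hveq⟩ := hv'
    rw [List.length_ofFn] at hi hj
    have hlc : (List.ofFn c).length = m := List.length_ofFn
    have hlc' : (List.ofFn c').length = m := List.length_ofFn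
    have hlne : List.ofFn c ≠ List.ofFn c' := fun h => hne (List.ofFn_injective h)
    have hmem : ∀ d, d ∈ D → T (List.ofFn d) < m →
        G (List.ofFn d) % (T (List.ofFn d) + 1) = A (T (List.ofFn d)) := by
      intro d hd hTd
      rw [hD, Finset.mem_union] at hd
      rcases hd with hd | hd
      · simp only [hW, Finset.mem_filter] at hd; omega
      · simp only [Finset.mem_biUnion, Finset.mem_range, hcls, Finset.mem_filter] at hd
        obtain ⟨t, ht, -, h1, h2⟩ := hd
        rw [h1]; exact h2
    rcases le_total i j with hij | hij
    · obtain ⟨hTT, hTm, hGmod⟩ := key hlc hlc' hi hj hij hveq hlne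
      have h1 := hmem c hc hTm
      have h2 := hmem c' hc' (hTT ▸ hTm)
      rw [← hTT] at h2
      exact hGmod (h1.trans h2.symm)
    · obtain ⟨hTT, hTm, hGmod⟩ := key hlc' hlc hj hi hij hveq.symm hlne.symm
      have h1 := hmem c' hc' hTm
      have h2 := hmem c hc (hTT ▸ hTm)
      rw [← hTT] at h2
      exact hGmod (h1.trans h2.symm)
end

section
/- For every integer m ≥ 3, Σ_{z=1}^{⌊m/2⌋} binom(m, 2z)/z ≤ 2^{m+2}/(m−2). -/
open Finset in
lemma odd_choose_sum (n : ℕ) (hn : n ≠ 0) :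
    2 * ∑ k ∈ (range (n+1)).filter (fun k => ¬ Even k), n.choose k = 2 ^ n := by
  have halt := Int.alternating_sum_range_choose_of_ne hn
  have hsplit := Finset.sum_filter_add_sum_filter_not (range (n+1)) (fun k => Even k)
      (fun k => ((-1:ℤ))^k * n.choose k)
  have he : ∑ k ∈ (range (n+1)).filter (fun k => Even k), ((-1:ℤ))^k * n.choose k
      = ∑ k ∈ (range (n+1)).filter (fun k => Even k), (n.choose k : ℤ) := by
    refine Finset.sum_congr rfl fun k hk => ?_
    rw [(Finset.mem_filter.mp hk).2.neg_one_pow, one_mul]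
  have ho : ∑ k ∈ (range (n+1)).filter (fun k => ¬ Even k), ((-1:ℤ))^k * n.choose k
      = - ∑ k ∈ (range (n+1)).filter (fun k => ¬ Even k), (n.choose k : ℤ) := by
    rw [← Finset.sum_neg_distrib]
    refine Finset.sum_congr rfl fun k hk => ?_
    rw [(Nat.not_even_iff_odd.mp (Finset.mem_filter.mp hk).2).neg_one_pow]
    ring
  have htot : ∑ k ∈ (range (n+1)).filter (fun k => Even k), (n.choose k : ℤ)
      + ∑ k ∈ (range (n+1)).filter (fun k => ¬ Even k), (n.choose k : ℤ) = 2 ^ n := by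
    rw [Finset.sum_filter_add_sum_filter_not]
    exact_mod_cast Nat.sum_range_choose n
  have : (2 : ℤ) * ∑ k ∈ (range (n+1)).filter (fun k => ¬ Even k), (n.choose k : ℤ) = 2 ^ n := by
    rw [he, ho] at hsplit
    rw [halt] at hsplit
    linarith
  exact_mod_cast this

/-- For every `m ≥ 3`,
`Σ_{z=1}^{⌊m/2⌋} binom(m, 2z)/z ≤ 2^{m+2}/(m−2)`. -/
theorem stmt19 (m : ℕ) (hm : 3 ≤ m) :
    ∑ z ∈ Finset.Icc 1 (m / 2), (m.choose (2 * z) : ℝ) / (z : ℝ) ≤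
      2 ^ (m + 2) / ((m : ℝ) - 2) := by
  have hmR : (3:ℝ) ≤ (m:ℝ) := by exact_mod_cast hm
  have hm1 : (0:ℝ) < (m:ℝ) + 1 := by linarith
  -- termwise bound
  have step1 : ∑ z ∈ Finset.Icc 1 (m / 2), (m.choose (2 * z) : ℝ) / (z : ℝ)
      ≤ ∑ z ∈ Finset.Icc 1 (m / 2), 3 * ((m+1).choose (2*z+1) : ℝ) / ((m:ℝ)+1) := by
    refine Finset.sum_le_sum fun z hz => ?_
    have hz1 : 1 ≤ z := (Finset.mem_Icc.mp hz).1
    have hzR : (1:ℝ) ≤ (z:ℝ) := by exact_mod_cast hz1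
    have hid : (m+1) * m.choose (2*z) = (m+1).choose (2*z+1) * (2*z+1) :=
      Nat.add_one_mul_choose_eq m (2*z)
    have hidR : ((m:ℝ)+1) * (m.choose (2*z) : ℝ) = ((m+1).choose (2*z+1) : ℝ) * (2*(z:ℝ)+1) := by
      exact_mod_cast hid
    have hC : (0:ℝ) ≤ ((m+1).choose (2*z+1) : ℝ) := Nat.cast_nonneg _
    rw [div_le_div_iff₀ (by linarith) hm1]
    nlinarith [hidR, hC]
  -- sum of odd binomials
  have hnat : ∑ z ∈ Finset.Icc 1 (m / 2), (m+1).choose (2*z+1) ≤ 2 ^ m := by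
    have hodd := odd_choose_sum (m+1) (by omega)
    have hle : ∑ z ∈ Finset.Icc 1 (m / 2), (m+1).choose (2*z+1)
        ≤ ∑ k ∈ (Finset.range (m+2)).filter (fun k => ¬ Even k), (m+1).choose k := by
      calc ∑ z ∈ Finset.Icc 1 (m / 2), (m+1).choose (2*z+1)
          = ∑ k ∈ (Finset.Icc 1 (m / 2)).image (fun z => 2*z+1), (m+1).choose k := by
            rw [Finset.sum_image]
            intro a _ b _ hab; simp only at hab; omega
        _ ≤ _ := by
            apply Finset.sum_le_sum_of_subset
            intro k hk
            simp only [Finset.mem_image, Finset.mem_Icc] at hk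
            obtain ⟨z, ⟨hz1, hz2⟩, rfl⟩ := hk
            have : 2 * z ≤ m := by omega
            simp only [Finset.mem_filter, Finset.mem_range]
            constructor
            · omega
            · simp [Nat.even_add_one, parity_simps]
    have hodd' : 2 * ∑ k ∈ (Finset.range (m+2)).filter (fun k => ¬ Even k), (m+1).choose k
        = 2^(m+1) := hodd
    have h2 : (2:ℕ)^(m+1) = 2^m * 2 := pow_succ 2 m
    omega
  have hsumR : ∑ z ∈ Finset.Icc 1 (m / 2), ((m+1).choose (2*z+1) : ℝ) ≤ 2 ^ m := by
    exact_mod_cast hnat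
  calc ∑ z ∈ Finset.Icc 1 (m / 2), (m.choose (2 * z) : ℝ) / (z : ℝ)
      ≤ ∑ z ∈ Finset.Icc 1 (m / 2), 3 * ((m+1).choose (2*z+1) : ℝ) / ((m:ℝ)+1) := step1
    _ = (3 / ((m:ℝ)+1)) * ∑ z ∈ Finset.Icc 1 (m / 2), ((m+1).choose (2*z+1) : ℝ) := by
        rw [Finset.mul_sum]; refine Finset.sum_congr rfl fun z _ => ?_; ring
    _ ≤ (3 / ((m:ℝ)+1)) * 2 ^ m := by
        apply mul_le_mul_of_nonneg_left hsumR (by positivity)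
    _ ≤ 2 ^ (m + 2) / ((m : ℝ) - 2) := by
        have h2m : (0:ℝ) < 2 ^ m := by positivity
        have hpow2 : (2:ℝ)^(m+2) = 4 * 2^m := by ring
        rw [div_mul_eq_mul_div, div_le_div_iff₀ hm1 (by linarith)]
        nlinarith [h2m]
end
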